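/- For every γ > 0, the set K_γ of stabilizing full-order dynamic output-feedback controllers whose closed-loop H∞ norm is strictly less than γ is an open subset of ℝ^{(n_u+n_x)×(n_y+n_x)}. -/

import Mathlib

set_option linter.unusedSectionVars false

open Matrix

noncomputable section

/-- Operator norm (largest singular value) of a complex matrix. -/
def matOpNorm {m n : ℕ} (M : Matrix (Fin m) (Fin n) ℂ) : ℝ :=
  ‖(Matrix.toEuclideanLin M).toContinuousLinearMap‖

/-- A real square matrix is Hurwitz if all its eigenvalues (over ℂ) have negative real part. -/
def IsHurwitz {n : Type*} [Fintype n] [DecidableEq n] (M : Matrix n n ℝ) : Prop :=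
  ∀ μ ∈ spectrum ℂ (M.map (Complex.ofReal ·)), μ.re < 0

namespace MyAux

variable {m n p q : Type*} [Fintype m] [Fintype n] [Fintype p] [Fintype q]
  [DecidableEq m] [DecidableEq n] [DecidableEq p] [DecidableEq q]

/-- generic operator norm -/
def gN (M : Matrix m n ℂ) : ℝ :=
  ‖(Matrix.toEuclideanLin M).toContinuousLinearMap‖

lemma matOpNorm_eq_gN {a b : ℕ} (M : Matrix (Fin a) (Fin b) ℂ) : matOpNorm M = gN M := rfl

abbrev L (M : Matrix m n ℂ) : EuclideanSpace ℂ n →L[ℂ] EuclideanSpace ℂ m :=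
  (Matrix.toEuclideanLin M).toContinuousLinearMap

lemma gN_eq (M : Matrix m n ℂ) : gN M = ‖L M‖ := rfl

lemma L_mul (M : Matrix m n ℂ) (N : Matrix n p ℂ) :
    L (M * N) = (L M).comp (L N) := by
  apply ContinuousLinearMap.coe_injective
  ext x
  simp [Matrix.toEuclideanLin_apply, Matrix.mulVec_mulVec]

lemma gN_mul_le (M : Matrix m n ℂ) (N : Matrix n p ℂ) :
    gN (M * N) ≤ gN M * gN N := by
  rw [gN_eq, gN_eq, gN_eq, L_mul]
  exact ContinuousLinearMap.opNorm_comp_le _ _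

lemma gN_add_le (M N : Matrix m n ℂ) : gN (M + N) ≤ gN M + gN N := by
  have : L (M + N) = L M + L N := by
    apply ContinuousLinearMap.coe_injective; simp [map_add]
  rw [gN_eq, gN_eq, gN_eq, this]; exact norm_add_le _ _

lemma gN_nonneg (M : Matrix m n ℂ) : 0 ≤ gN M := norm_nonneg _

lemma gN_neg (M : Matrix m n ℂ) : gN (-M) = gN M := by
  have : L (-M) = -(L M) := by
    apply ContinuousLinearMap.coe_injective; simp [map_neg]
  rw [gN_eq, gN_eq, this, norm_neg]

lemma continuous_gN : Continuous (gN : Matrix m n ℂ → ℝ) := by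
  have h1 : Continuous (fun M : Matrix m n ℂ => L M) := by
    have h : IsLinearMap ℂ (fun M : Matrix m n ℂ => L M) := by
      constructor
      · intro M N; apply ContinuousLinearMap.coe_injective; simp [map_add]
      · intro c M; apply ContinuousLinearMap.coe_injective; simp [_root_.map_smul]
    exact (IsLinearMap.mk' _ h).continuous_of_finiteDimensional
  exact continuous_norm.comp h1

lemma L_sq (M : Matrix n n ℂ) : L M = Matrix.toEuclideanCLM (𝕜 := ℂ) M := by
  apply ContinuousLinearMap.coe_injective
  rw [Matrix.coe_toEuclideanCLM_eq_toEuclideanLin]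
  rfl

/-- eigenvalue bound -/
lemma spectrum_norm_le (M : Matrix n n ℂ) {μ : ℂ}
    (h : μ ∈ spectrum ℂ M) : ‖μ‖ ≤ gN M := by
  cases isEmpty_or_nonempty n with
  | inl h0 =>
    exfalso
    rw [spectrum.mem_iff] at h
    apply h
    exact ⟨⟨_, (0 : Matrix n n ℂ), Subsingleton.elim _ _, Subsingleton.elim _ _⟩, rfl⟩
  | inr h0 =>
    haveI : Nontrivial (EuclideanSpace ℂ n) := by
      obtain ⟨i⟩ := h0
      refine ⟨0, EuclideanSpace.single i 1, ?_⟩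
      intro hcon
      have := congrFun (congrArg (fun v : EuclideanSpace ℂ n => (v : n → ℂ)) hcon) i
      simp [EuclideanSpace.single] at this
    have heq := AlgEquiv.spectrum_eq (Matrix.toEuclideanCLM (𝕜 := ℂ) (n := n)) M
    rw [← heq] at h
    have hb := spectrum.norm_le_norm_of_mem h
    rwa [show ‖Matrix.toEuclideanCLM (𝕜 := ℂ) M‖ = gN M from by rw [gN_eq, ← L_sq]] at hb

/-- if L S bounded below, S invertible with inverse bound -/
lemma invertible_of_bddBelow (S : Matrix n n ℂ) {c : ℝ} (hc : 0 < c)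
    (h : ∀ x : EuclideanSpace ℂ n, c * ‖x‖ ≤ ‖L S x‖) :
    IsUnit S.det ∧ gN S⁻¹ ≤ c⁻¹ := by
  have hinj : Function.Injective (Matrix.toEuclideanLin S) := by
    rw [← LinearMap.ker_eq_bot, LinearMap.ker_eq_bot']
    intro x hx
    have hh := h x
    rw [show (Matrix.toEuclideanLin S) x = L S x from rfl] at hx
    rw [hx, norm_zero] at hh
    have hx0 : ‖x‖ ≤ 0 := by nlinarith
    exact norm_eq_zero.mp (le_antisymm hx0 (norm_nonneg x))
  have hunit : IsUnit S := by
    have hsurj : Function.Surjective (Matrix.toEuclideanLin S) :=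
      LinearMap.injective_iff_surjective.mp hinj
    let e := LinearEquiv.ofBijective (Matrix.toEuclideanLin S) ⟨hinj, hsurj⟩
    let B := Matrix.toEuclideanLin.symm (e.symm : EuclideanSpace ℂ n →ₗ[ℂ] EuclideanSpace ℂ n)
    have hSB : S * B = 1 := ?_
    · exact ⟨⟨S, B, hSB, (mul_eq_one_comm).mp hSB⟩, rfl⟩
    apply Matrix.toEuclideanLin.injective
    have hmul : Matrix.toEuclideanLin (S * B)
        = (Matrix.toEuclideanLin S).comp (Matrix.toEuclideanLin B) := by
      ext x
      simp [Matrix.toEuclideanLin_apply, Matrix.mulVec_mulVec]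
    rw [hmul]
    have hB : Matrix.toEuclideanLin B = (e.symm : EuclideanSpace ℂ n →ₗ[ℂ] EuclideanSpace ℂ n) :=
      Matrix.toEuclideanLin.apply_symm_apply _
    rw [hB]
    apply LinearMap.ext; intro x
    show (Matrix.toEuclideanLin S) (e.symm x) = (Matrix.toEuclideanLin 1) x
    rw [show (Matrix.toEuclideanLin S) (e.symm x) = e (e.symm x) from rfl, e.apply_symm_apply]
    simp [Matrix.toEuclideanLin_apply, Matrix.one_mulVec]
  have hdet := (Matrix.isUnit_iff_isUnit_det S).mp hunit
  refine ⟨hdet, ?_⟩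
  rw [gN_eq]
  apply ContinuousLinearMap.opNorm_le_bound _ (by positivity)
  intro y
  have hSS : S * S⁻¹ = 1 := Matrix.mul_nonsing_inv S hdet
  have key : L S (L S⁻¹ y) = y := by
    have hcomp : (L S).comp (L S⁻¹) = L (S * S⁻¹) := by
      apply ContinuousLinearMap.coe_injective
      ext x
      simp [Matrix.toEuclideanLin_apply, Matrix.mulVec_mulVec]
    have := ContinuousLinearMap.ext_iff.mp hcomp y
    simp only [ContinuousLinearMap.comp_apply] at this
    rw [this, hSS]
    simp [Matrix.toEuclideanLin_apply, Matrix.one_mulVec]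
  have := h (L S⁻¹ y)
  rw [key] at this
  rw [inv_mul_eq_div, le_div_iff₀ hc, mul_comm]
  linarith

lemma resolvent_bound (A : Matrix n n ℂ) (c : ℂ) (h : gN A < ‖c‖) :
    IsUnit (c • (1 : Matrix n n ℂ) - A).det ∧
      gN ((c • (1 : Matrix n n ℂ) - A)⁻¹) ≤ (‖c‖ - gN A)⁻¹ := by
  apply invertible_of_bddBelow _ (by linarith : (0:ℝ) < ‖c‖ - gN A)
  intro x
  have h1 : L (c • (1 : Matrix n n ℂ) - A) x = c • x - L A x := by
    show Matrix.toEuclideanLin _ x = _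
    simp [map_sub, _root_.map_smul, Matrix.toEuclideanLin_apply, Matrix.one_mulVec]
  rw [h1]
  have h2 : ‖c • x‖ - ‖L A x‖ ≤ ‖c • x - L A x‖ := norm_sub_norm_le _ _
  have h3 : ‖L A x‖ ≤ gN A * ‖x‖ :=
    (Matrix.toEuclideanLin A).toContinuousLinearMap.le_opNorm x
  have h4 : ‖c • x‖ = ‖c‖ * ‖x‖ := norm_smul _ _
  nlinarith [norm_nonneg x]

lemma continuous_mapC : Continuous (fun M : Matrix m n ℝ => M.map (Complex.ofReal ·)) :=
  continuous_matrix fun i j =>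
    Complex.continuous_ofReal.comp ((continuous_apply j).comp (continuous_apply i))

lemma mem_spectrum_iff_det (M : Matrix n n ℂ) (μ : ℂ) :
    μ ∈ spectrum ℂ M ↔ (μ • (1 : Matrix n n ℂ) - M).det = 0 := by
  rw [spectrum.mem_iff, Algebra.algebraMap_eq_smul_one, Matrix.isUnit_iff_isUnit_det,
    isUnit_iff_ne_zero]
  tauto

lemma hurwitz_det_ne {M : Matrix n n ℝ} (hM : IsHurwitz M) (ω : ℝ) :
    ((Complex.I * (ω:ℂ)) • (1 : Matrix n n ℂ) - M.map (Complex.ofReal ·)).det ≠ 0 := by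
  intro hdet
  have := hM (Complex.I * ω) ((mem_spectrum_iff_det _ _).mpr hdet)
  simp [Complex.mul_re] at this

lemma isOpen_setOf_isHurwitz : IsOpen {M : Matrix n n ℝ | IsHurwitz M} := by
  rw [isOpen_iff_forall_mem_open]
  intro M₀ hM₀
  set R : ℝ := gN (M₀.map (Complex.ofReal ·)) + 1 with hR
  set C : Set ℂ := {z : ℂ | 0 ≤ z.re ∧ ‖z‖ ≤ R} with hC
  have hCcpt : IsCompact C := by
    apply (isCompact_closedBall (0:ℂ) R).of_isClosed_subset
    · exact IsClosed.inter (isClosed_le continuous_const Complex.continuous_re)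
        (isClosed_le continuous_norm continuous_const)
    · intro z hz
      simpa [Metric.mem_closedBall, dist_eq_norm] using hz.2
  set N : Set (Matrix n n ℝ × ℂ) :=
    {p | (p.2 • (1 : Matrix n n ℂ) - p.1.map (Complex.ofReal ·)).det ≠ 0} with hN
  have hNopen : IsOpen N := by
    have hcont : Continuous (fun p : Matrix n n ℝ × ℂ =>
        (p.2 • (1 : Matrix n n ℂ) - p.1.map (Complex.ofReal ·)).det) := by
      apply Continuous.matrix_det
      exact (continuous_snd.smul continuous_const).sub (continuous_mapC.comp continuous_fst)
    exact isOpen_compl_singleton.preimage hcont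
  have hsub : {M₀} ×ˢ C ⊆ N := by
    rintro ⟨M, z⟩ ⟨hM, hz⟩
    simp only [Set.mem_singleton_iff] at hM
    subst hM
    intro hdet
    exact absurd (hM₀ z ((mem_spectrum_iff_det _ z).mpr hdet)) (not_lt.mpr hz.1)
  obtain ⟨u, v, hu, hv, hMu, hCv, huv⟩ :=
    generalized_tube_lemma isCompact_singleton hCcpt hNopen hsub
  refine ⟨u ∩ {M | gN (M.map (Complex.ofReal ·)) < R}, ?_, ?_, ?_⟩
  · rintro M ⟨hMu', hMR⟩ μ hμ
    by_contra hre
    push_neg at hre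
    have hnorm : ‖μ‖ ≤ gN (M.map (Complex.ofReal ·)) := spectrum_norm_le _ hμ
    have hμC : μ ∈ C := ⟨hre, le_of_lt (lt_of_le_of_lt hnorm hMR)⟩
    have hmemN : (M, μ) ∈ N := huv (Set.mk_mem_prod hMu' (hCv hμC))
    exact hmemN ((mem_spectrum_iff_det _ μ).mp hμ)
  · exact hu.inter (isOpen_Iio.preimage (continuous_gN.comp continuous_mapC))
  · exact ⟨hMu rfl, by simp [hR]⟩

/-- transfer function norm bounds -/
lemma transfer_norm_le (A : Matrix n n ℂ) (B : Matrix n p ℂ) (C : Matrix q n ℂ)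
    (D : Matrix q p ℂ) (ω : ℝ) (h : gN A < |ω|) :
    gN (C * ((Complex.I * (ω:ℂ)) • (1 : Matrix n n ℂ) - A)⁻¹ * B + D)
      ≤ gN C * gN B * (|ω| - gN A)⁻¹ + gN D
    ∧ gN D ≤ gN (C * ((Complex.I * (ω:ℂ)) • (1 : Matrix n n ℂ) - A)⁻¹ * B + D)
      + gN C * gN B * (|ω| - gN A)⁻¹ := by
  have hc : ‖Complex.I * (ω:ℂ)‖ = |ω| := by
    rw [norm_mul, Complex.norm_I, one_mul, Complex.norm_real, Real.norm_eq_abs]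
  obtain ⟨hdet, hSinv⟩ := resolvent_bound A (Complex.I * ω) (by rwa [hc])
  rw [hc] at hSinv
  set S := (Complex.I * (ω:ℂ)) • (1 : Matrix n n ℂ) - A with hS
  have hX : gN (C * S⁻¹ * B) ≤ gN C * gN B * (|ω| - gN A)⁻¹ := by
    have h1 := gN_mul_le (C * S⁻¹) B
    have h2 := gN_mul_le C S⁻¹
    have hB := gN_nonneg B
    have hC := gN_nonneg C
    have hSi := gN_nonneg S⁻¹
    have hpos : (0:ℝ) < |ω| - gN A := by linarith
    calc gN (C * S⁻¹ * B) ≤ gN (C * S⁻¹) * gN B := h1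
      _ ≤ (gN C * gN S⁻¹) * gN B := mul_le_mul_of_nonneg_right h2 hB
      _ = gN C * gN B * gN S⁻¹ := by ring
      _ ≤ gN C * gN B * (|ω| - gN A)⁻¹ :=
          mul_le_mul_of_nonneg_left hSinv (mul_nonneg hC hB)
  constructor
  · have := gN_add_le (C * S⁻¹ * B) D
    linarith
  · have h5 : gN D ≤ gN (C * S⁻¹ * B + D) + gN (C * S⁻¹ * B) := by
      have := gN_add_le (C * S⁻¹ * B + D) (-(C * S⁻¹ * B))
      rw [add_neg_cancel_comm, gN_neg] at this
      exact this
    linarith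

end MyAux
/-- The plant data. -/
structure Plant (nx nu ny nw nz : ℕ) where
  A : Matrix (Fin nx) (Fin nx) ℝ
  B1 : Matrix (Fin nx) (Fin nw) ℝ
  B2 : Matrix (Fin nx) (Fin nu) ℝ
  C1 : Matrix (Fin nz) (Fin nx) ℝ
  C2 : Matrix (Fin ny) (Fin nx) ℝ
  D11 : Matrix (Fin nz) (Fin nw) ℝ
  D12 : Matrix (Fin nz) (Fin nu) ℝ
  D21 : Matrix (Fin ny) (Fin nw) ℝ

namespace Plant

variable {nx nu ny nw nz : ℕ} (P : Plant nx nu ny nw nz)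

/-- Closed-loop `A` matrix. -/
def Acl (K : Matrix (Fin nu ⊕ Fin nx) (Fin ny ⊕ Fin nx) ℝ) :
    Matrix (Fin nx ⊕ Fin nx) (Fin nx ⊕ Fin nx) ℝ :=
  fromBlocks (P.A + P.B2 * K.toBlocks₁₁ * P.C2) (P.B2 * K.toBlocks₁₂)
    (K.toBlocks₂₁ * P.C2) K.toBlocks₂₂

/-- Closed-loop `B` matrix. -/
def Bcl (K : Matrix (Fin nu ⊕ Fin nx) (Fin ny ⊕ Fin nx) ℝ) :
    Matrix (Fin nx ⊕ Fin nx) (Fin nw) ℝ :=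
  fromRows (P.B1 + P.B2 * K.toBlocks₁₁ * P.D21) (K.toBlocks₂₁ * P.D21)

/-- Closed-loop `C` matrix. -/
def Ccl (K : Matrix (Fin nu ⊕ Fin nx) (Fin ny ⊕ Fin nx) ℝ) :
    Matrix (Fin nz) (Fin nx ⊕ Fin nx) ℝ :=
  fromCols (P.C1 + P.D12 * K.toBlocks₁₁ * P.C2) (P.D12 * K.toBlocks₁₂)

/-- Closed-loop `D` matrix. -/
def Dcl (K : Matrix (Fin nu ⊕ Fin nx) (Fin ny ⊕ Fin nx) ℝ) :
    Matrix (Fin nz) (Fin nw) ℝ :=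
  P.D11 + P.D12 * K.toBlocks₁₁ * P.D21

/-- The set of stabilizing full-order dynamic output feedback controllers. -/
def Cstab : Set (Matrix (Fin nu ⊕ Fin nx) (Fin ny ⊕ Fin nx) ℝ) :=
  {K | IsHurwitz (P.Acl K)}

/-- Closed-loop transfer matrix at frequency `s = iω`. -/
def transferAt (K : Matrix (Fin nu ⊕ Fin nx) (Fin ny ⊕ Fin nx) ℝ) (ω : ℝ) :
    Matrix (Fin nz) (Fin nw) ℂ :=
  (P.Ccl K).map (Complex.ofReal ·) *
    (((Complex.I * (ω : ℂ)) • (1 : Matrix (Fin nx ⊕ Fin nx) (Fin nx ⊕ Fin nx) ℂ)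
        - (P.Acl K).map (Complex.ofReal ·))⁻¹) *
    (P.Bcl K).map (Complex.ofReal ·) + (P.Dcl K).map (Complex.ofReal ·)

/-- Closed-loop H∞ norm. -/
def hinfNorm (K : Matrix (Fin nu ⊕ Fin nx) (Fin ny ⊕ Fin nx) ℝ) : ℝ :=
  ⨆ ω : ℝ, matOpNorm (P.transferAt K ω)

/-- The feasible set `K_γ`. -/
def Kset (γ : ℝ) : Set (Matrix (Fin nu ⊕ Fin nx) (Fin ny ⊕ Fin nx) ℝ) :=
  {K | K ∈ P.Cstab ∧ P.hinfNorm K < γ}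

end Plant

/-- The similarity transformation `𝒯_T` on full-order controllers. -/
def simT {nx nu ny : ℕ} (T : Matrix (Fin nx) (Fin nx) ℝ)
    (K : Matrix (Fin nu ⊕ Fin nx) (Fin ny ⊕ Fin nx) ℝ) :
    Matrix (Fin nu ⊕ Fin nx) (Fin ny ⊕ Fin nx) ℝ :=
  fromBlocks K.toBlocks₁₁ (K.toBlocks₁₂ * T⁻¹) (T * K.toBlocks₂₁) (T * K.toBlocks₂₂ * T⁻¹)


namespace Plant

open MyAux

variable {nx nu ny nw nz : ℕ} (P : Plant nx nu ny nw nz)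

lemma contAcl : Continuous P.Acl := by
  have h11 : Continuous (fun K : Matrix (Fin nu ⊕ Fin nx) (Fin ny ⊕ Fin nx) ℝ => K.toBlocks₁₁) :=
    continuous_matrix fun i j => continuous_id.matrix_elem _ _
  have h12 : Continuous (fun K : Matrix (Fin nu ⊕ Fin nx) (Fin ny ⊕ Fin nx) ℝ => K.toBlocks₁₂) :=
    continuous_matrix fun i j => continuous_id.matrix_elem _ _
  have h21 : Continuous (fun K : Matrix (Fin nu ⊕ Fin nx) (Fin ny ⊕ Fin nx) ℝ => K.toBlocks₂₁) :=
    continuous_matrix fun i j => continuous_id.matrix_elem _ _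
  have h22 : Continuous (fun K : Matrix (Fin nu ⊕ Fin nx) (Fin ny ⊕ Fin nx) ℝ => K.toBlocks₂₂) :=
    continuous_matrix fun i j => continuous_id.matrix_elem _ _
  unfold Plant.Acl
  exact Continuous.matrix_fromBlocks
    (continuous_const.add ((continuous_const.matrix_mul h11).matrix_mul continuous_const))
    (continuous_const.matrix_mul h12)
    (h21.matrix_mul continuous_const) h22

lemma contBcl : Continuous P.Bcl := by
  have h11 : Continuous (fun K : Matrix (Fin nu ⊕ Fin nx) (Fin ny ⊕ Fin nx) ℝ => K.toBlocks₁₁) :=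
    continuous_matrix fun i j => continuous_id.matrix_elem _ _
  have h21 : Continuous (fun K : Matrix (Fin nu ⊕ Fin nx) (Fin ny ⊕ Fin nx) ℝ => K.toBlocks₂₁) :=
    continuous_matrix fun i j => continuous_id.matrix_elem _ _
  apply continuous_matrix
  rintro (i | i) j
  · simp only [Plant.Bcl, Matrix.fromRows_apply_inl]
    exact Continuous.matrix_elem
      (continuous_const.add ((continuous_const.matrix_mul h11).matrix_mul continuous_const)) _ _
  · simp only [Plant.Bcl, Matrix.fromRows_apply_inr]
    exact Continuous.matrix_elem (h21.matrix_mul continuous_const) _ _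

lemma contCcl : Continuous P.Ccl := by
  have h11 : Continuous (fun K : Matrix (Fin nu ⊕ Fin nx) (Fin ny ⊕ Fin nx) ℝ => K.toBlocks₁₁) :=
    continuous_matrix fun i j => continuous_id.matrix_elem _ _
  have h12 : Continuous (fun K : Matrix (Fin nu ⊕ Fin nx) (Fin ny ⊕ Fin nx) ℝ => K.toBlocks₁₂) :=
    continuous_matrix fun i j => continuous_id.matrix_elem _ _
  apply continuous_matrix
  rintro i (j | j)
  · simp only [Plant.Ccl, Matrix.fromCols_apply_inl]
    exact Continuous.matrix_elem
      (continuous_const.add ((continuous_const.matrix_mul h11).matrix_mul continuous_const)) _ _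
  · simp only [Plant.Ccl, Matrix.fromCols_apply_inr]
    exact Continuous.matrix_elem (continuous_const.matrix_mul h12) _ _

lemma contDcl : Continuous P.Dcl := by
  have h11 : Continuous (fun K : Matrix (Fin nu ⊕ Fin nx) (Fin ny ⊕ Fin nx) ℝ => K.toBlocks₁₁) :=
    continuous_matrix fun i j => continuous_id.matrix_elem _ _
  unfold Plant.Dcl
  exact continuous_const.add ((continuous_const.matrix_mul h11).matrix_mul continuous_const)

end Plant

set_option maxHeartbeats 2000000 in
/-- For every `γ > 0`, the set `K_γ` of stabilizing full-order dynamic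
output-feedback controllers whose closed-loop H∞ norm is strictly less than `γ` is an open
subset of `ℝ^{(n_u+n_x)×(n_y+n_x)}`. -/
theorem Kset_isOpen {nx nu ny nw nz : ℕ} (hnx : 0 < nx) (hnu : 0 < nu) (hny : 0 < ny)
    (hnw : 0 < nw) (hnz : 0 < nz) (P : Plant nx nu ny nw nz) :
    ∀ γ : ℝ, 0 < γ → IsOpen (P.Kset γ) := by
  classical
  intro γ hγ
  rw [isOpen_iff_forall_mem_open]
  intro K₀ hK₀
  obtain ⟨hK₀stab, hK₀γ⟩ := hK₀
  have hK₀hur : IsHurwitz (P.Acl K₀) := hK₀stab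
  -- continuity of data
  have hAp : Continuous (fun p : Matrix (Fin nu ⊕ Fin nx) (Fin ny ⊕ Fin nx) ℝ × ℝ =>
      (P.Acl p.1).map (Complex.ofReal ·)) :=
    MyAux.continuous_mapC.comp (P.contAcl.comp continuous_fst)
  have hBp : Continuous (fun p : Matrix (Fin nu ⊕ Fin nx) (Fin ny ⊕ Fin nx) ℝ × ℝ =>
      (P.Bcl p.1).map (Complex.ofReal ·)) :=
    MyAux.continuous_mapC.comp (P.contBcl.comp continuous_fst)
  have hCp : Continuous (fun p : Matrix (Fin nu ⊕ Fin nx) (Fin ny ⊕ Fin nx) ℝ × ℝ =>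
      (P.Ccl p.1).map (Complex.ofReal ·)) :=
    MyAux.continuous_mapC.comp (P.contCcl.comp continuous_fst)
  have hDp : Continuous (fun p : Matrix (Fin nu ⊕ Fin nx) (Fin ny ⊕ Fin nx) ℝ × ℝ =>
      (P.Dcl p.1).map (Complex.ofReal ·)) :=
    MyAux.continuous_mapC.comp (P.contDcl.comp continuous_fst)
  have hScont : Continuous (fun p : Matrix (Fin nu ⊕ Fin nx) (Fin ny ⊕ Fin nx) ℝ × ℝ =>
      (Complex.I * (p.2 : ℂ)) • (1 : Matrix (Fin nx ⊕ Fin nx) (Fin nx ⊕ Fin nx) ℂ)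
        - (P.Acl p.1).map (Complex.ofReal ·)) :=
    ((continuous_const.mul (Complex.continuous_ofReal.comp continuous_snd)).smul
      continuous_const).sub hAp
  set W : Set (Matrix (Fin nu ⊕ Fin nx) (Fin ny ⊕ Fin nx) ℝ × ℝ) :=
    {p | ((Complex.I * (p.2 : ℂ)) • (1 : Matrix (Fin nx ⊕ Fin nx) (Fin nx ⊕ Fin nx) ℂ)
      - (P.Acl p.1).map (Complex.ofReal ·)).det ≠ 0} with hWdef
  have hWopen : IsOpen W := isOpen_compl_singleton.preimage hScont.matrix_det
  -- continuity of the transfer function on W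
  have htrans : ContinuousOn (fun p : Matrix (Fin nu ⊕ Fin nx) (Fin ny ⊕ Fin nx) ℝ × ℝ =>
      P.transferAt p.1 p.2) W := by
    intro pt hpt
    apply ContinuousAt.continuousWithinAt
    have hu : IsUnit ((Complex.I * ((pt.2 : ℝ) : ℂ)) •
        (1 : Matrix (Fin nx ⊕ Fin nx) (Fin nx ⊕ Fin nx) ℂ)
        - (P.Acl pt.1).map (Complex.ofReal ·)).det := isUnit_iff_ne_zero.mpr hpt
    have h1 : ContinuousAt Ring.inverse (((Complex.I * ((pt.2 : ℝ) : ℂ)) •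
        (1 : Matrix (Fin nx ⊕ Fin nx) (Fin nx ⊕ Fin nx) ℂ)
        - (P.Acl pt.1).map (Complex.ofReal ·)).det) := by
      have := NormedRing.inverse_continuousAt hu.unit
      rwa [IsUnit.unit_spec] at this
    have hinv : ContinuousAt (fun p : Matrix (Fin nu ⊕ Fin nx) (Fin ny ⊕ Fin nx) ℝ × ℝ =>
        ((Complex.I * (p.2 : ℂ)) • (1 : Matrix (Fin nx ⊕ Fin nx) (Fin nx ⊕ Fin nx) ℂ)
          - (P.Acl p.1).map (Complex.ofReal ·))⁻¹) pt := by
      have h2 : ContinuousAt (Inv.inv : Matrix (Fin nx ⊕ Fin nx) (Fin nx ⊕ Fin nx) ℂ → _)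
          ((Complex.I * ((pt.2 : ℝ) : ℂ)) • (1 : Matrix (Fin nx ⊕ Fin nx) (Fin nx ⊕ Fin nx) ℂ)
            - (P.Acl pt.1).map (Complex.ofReal ·)) := continuousAt_matrix_inv _ h1
      have htmp := Filter.Tendsto.comp h2 hScont.continuousAt
      exact htmp
    have hg : Continuous (fun q : Matrix (Fin nz) (Fin nx ⊕ Fin nx) ℂ ×
        Matrix (Fin nx ⊕ Fin nx) (Fin nx ⊕ Fin nx) ℂ ×
        Matrix (Fin nx ⊕ Fin nx) (Fin nw) ℂ × Matrix (Fin nz) (Fin nw) ℂ =>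
        q.1 * q.2.1 * q.2.2.1 + q.2.2.2) :=
      ((continuous_fst.matrix_mul (continuous_fst.comp continuous_snd)).matrix_mul
        (continuous_fst.comp (continuous_snd.comp continuous_snd))).add
        (continuous_snd.comp (continuous_snd.comp continuous_snd))
    have h4 : ContinuousAt (fun p : Matrix (Fin nu ⊕ Fin nx) (Fin ny ⊕ Fin nx) ℝ × ℝ =>
        ((P.Ccl p.1).map (Complex.ofReal ·),
          (((Complex.I * (p.2 : ℂ)) • (1 : Matrix (Fin nx ⊕ Fin nx) (Fin nx ⊕ Fin nx) ℂ)
            - (P.Acl p.1).map (Complex.ofReal ·))⁻¹,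
          ((P.Bcl p.1).map (Complex.ofReal ·), (P.Dcl p.1).map (Complex.ofReal ·))))) pt :=
      hCp.continuousAt.prodMk (hinv.prodMk (hBp.continuousAt.prodMk hDp.continuousAt))
    have heq : (fun p : Matrix (Fin nu ⊕ Fin nx) (Fin ny ⊕ Fin nx) ℝ × ℝ =>
        P.transferAt p.1 p.2)
        = fun p => (P.Ccl p.1).map (Complex.ofReal ·) *
            (((Complex.I * (p.2 : ℂ)) • (1 : Matrix (Fin nx ⊕ Fin nx) (Fin nx ⊕ Fin nx) ℂ)
              - (P.Acl p.1).map (Complex.ofReal ·))⁻¹) *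
            (P.Bcl p.1).map (Complex.ofReal ·) + (P.Dcl p.1).map (Complex.ofReal ·) := rfl
    rw [heq]
    have htmp := ContinuousAt.comp hg.continuousAt h4
    exact htmp
  have hf : ContinuousOn (fun p : Matrix (Fin nu ⊕ Fin nx) (Fin ny ⊕ Fin nx) ℝ × ℝ =>
      MyAux.gN (P.transferAt p.1 p.2)) W := MyAux.continuous_gN.comp_continuousOn htrans
  -- the transfer bounds
  have hTB : ∀ (K : Matrix (Fin nu ⊕ Fin nx) (Fin ny ⊕ Fin nx) ℝ) (ω : ℝ),
      MyAux.gN ((P.Acl K).map (Complex.ofReal ·)) < |ω| →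
      MyAux.gN (P.transferAt K ω)
        ≤ MyAux.gN ((P.Ccl K).map (Complex.ofReal ·)) * MyAux.gN ((P.Bcl K).map (Complex.ofReal ·))
          * (|ω| - MyAux.gN ((P.Acl K).map (Complex.ofReal ·)))⁻¹
          + MyAux.gN ((P.Dcl K).map (Complex.ofReal ·))
      ∧ MyAux.gN ((P.Dcl K).map (Complex.ofReal ·)) ≤ MyAux.gN (P.transferAt K ω)
        + MyAux.gN ((P.Ccl K).map (Complex.ofReal ·)) * MyAux.gN ((P.Bcl K).map (Complex.ofReal ·))
          * (|ω| - MyAux.gN ((P.Acl K).map (Complex.ofReal ·)))⁻¹ := by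
    intro K ω h
    exact MyAux.transfer_norm_le ((P.Acl K).map (Complex.ofReal ·))
      ((P.Bcl K).map (Complex.ofReal ·)) ((P.Ccl K).map (Complex.ofReal ·))
      ((P.Dcl K).map (Complex.ofReal ·)) ω h
  set a₀ := MyAux.gN ((P.Acl K₀).map (Complex.ofReal ·)) with ha₀
  set b₀ := MyAux.gN ((P.Bcl K₀).map (Complex.ofReal ·)) with hb₀
  set c₀ := MyAux.gN ((P.Ccl K₀).map (Complex.ofReal ·)) with hc₀
  set d₀ := MyAux.gN ((P.Dcl K₀).map (Complex.ofReal ·)) with hd₀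
  have ha₀0 : 0 ≤ a₀ := MyAux.gN_nonneg _
  have hb₀0 : 0 ≤ b₀ := MyAux.gN_nonneg _
  have hc₀0 : 0 ≤ c₀ := MyAux.gN_nonneg _
  have hd₀0 : 0 ≤ d₀ := MyAux.gN_nonneg _
  -- K₀ is everywhere in W
  have hK₀W : ∀ ω : ℝ, (K₀, ω) ∈ W := fun ω => MyAux.hurwitz_det_ne hK₀hur ω
  -- Bounded above
  have hBdd : BddAbove (Set.range fun ω : ℝ => matOpNorm (P.transferAt K₀ ω)) := by
    have hcurve : ContinuousOn (fun ω : ℝ => MyAux.gN (P.transferAt K₀ ω))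
        (Set.Icc (-(a₀+1)) (a₀+1)) := by
      have hgc : Continuous (fun ω : ℝ =>
          ((K₀, ω) : Matrix (Fin nu ⊕ Fin nx) (Fin ny ⊕ Fin nx) ℝ × ℝ)) :=
        continuous_const.prodMk continuous_id
      have htmp := ContinuousOn.comp (s := Set.Icc (-(a₀+1)) (a₀+1)) hf hgc.continuousOn (fun ω _ => hK₀W ω)
      exact htmp
    obtain ⟨Bd, hBd⟩ :=
      (isCompact_Icc (a := -(a₀+1)) (b := a₀+1)).exists_bound_of_continuousOn hcurve
    refine ⟨max Bd (c₀ * b₀ + d₀), ?_⟩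
    rintro x ⟨ω, rfl⟩
    rcases le_or_gt |ω| (a₀ + 1) with hsm | hbig
    · have hmem : ω ∈ Set.Icc (-(a₀+1)) (a₀+1) := abs_le.mp hsm
      have h2 := hBd ω hmem
      rw [Real.norm_eq_abs] at h2
      exact le_max_iff.mpr (Or.inl ((le_abs_self _).trans h2))
    · have h := (hTB K₀ ω (by linarith)).1
      have hpos : (0:ℝ) < |ω| - a₀ := by linarith
      have hone : (|ω| - a₀)⁻¹ ≤ 1 := by
        rw [inv_le_one_iff₀]; right; linarith
      have h4 : c₀ * b₀ * (|ω| - a₀)⁻¹ ≤ c₀ * b₀ * 1 :=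
        mul_le_mul_of_nonneg_left hone (mul_nonneg hc₀0 hb₀0)
      rw [mul_one] at h4
      refine le_max_iff.mpr (Or.inr ?_)
      calc matOpNorm (P.transferAt K₀ ω) = MyAux.gN (P.transferAt K₀ ω) := rfl
        _ ≤ c₀ * b₀ * (|ω| - a₀)⁻¹ + d₀ := h
        _ ≤ c₀ * b₀ + d₀ := by linarith [h4]
  have hle : ∀ ω : ℝ, MyAux.gN (P.transferAt K₀ ω) ≤ P.hinfNorm K₀ := by
    intro ω
    exact le_ciSup hBdd ω
  -- d₀ ≤ hinfNorm K₀
  have hd₀le : d₀ ≤ P.hinfNorm K₀ := by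
    apply le_of_forall_pos_le_add
    intro ε hε
    set ω : ℝ := a₀ + max 1 (c₀ * b₀ / ε) with hω
    have hω1 : 1 ≤ max 1 (c₀ * b₀ / ε) := le_max_left _ _
    have hωpos : 0 < ω := by rw [hω]; linarith
    have habs : |ω| = ω := abs_of_pos hωpos
    have haω : a₀ < |ω| := by rw [habs, hω]; linarith
    have h := (hTB K₀ ω haω).2
    have hsub : |ω| - a₀ = max 1 (c₀ * b₀ / ε) := by rw [habs, hω]; ring
    have htail : c₀ * b₀ * (|ω| - a₀)⁻¹ ≤ ε := by
      rw [hsub]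
      rw [mul_inv_le_iff₀ (by linarith : (0:ℝ) < max 1 (c₀ * b₀ / ε))]
      calc c₀ * b₀ = ε * (c₀ * b₀ / ε) := by field_simp
        _ ≤ ε * max 1 (c₀ * b₀ / ε) := by
            exact mul_le_mul_of_nonneg_left (le_max_right _ _) hε.le
    have := hle ω
    linarith
  have hd₀γ : d₀ < γ := lt_of_le_of_lt hd₀le hK₀γ
  -- margins
  set δ : ℝ := (γ - d₀) / 2 with hδ
  have hδpos : 0 < δ := by rw [hδ]; linarith
  set R : ℝ := a₀ + 2 + 2 * (c₀ + 1) * (b₀ + 1) / δ with hR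
  have hRbig : a₀ + 2 ≤ R := by
    rw [hR]
    have : 0 ≤ 2 * (c₀ + 1) * (b₀ + 1) / δ := by positivity
    linarith
  set γ₁ : ℝ := (P.hinfNorm K₀ + γ) / 2 with hγ₁
  have hγ₁lt : γ₁ < γ := by rw [hγ₁]; linarith
  have hhinfγ₁ : P.hinfNorm K₀ < γ₁ := by rw [hγ₁]; linarith
  -- tube lemma on the compact part
  set Nset : Set (Matrix (Fin nu ⊕ Fin nx) (Fin ny ⊕ Fin nx) ℝ × ℝ) :=
    W ∩ {p | MyAux.gN (P.transferAt p.1 p.2) < γ₁} with hNset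
  have hNopen : IsOpen Nset := by
    have := ContinuousOn.isOpen_inter_preimage hf hWopen (isOpen_Iio (a := γ₁))
    exact this
  have hsub : {K₀} ×ˢ Set.Icc (-R) R ⊆ Nset := by
    rintro ⟨K, ω⟩ ⟨hK, hω⟩
    simp only [Set.mem_singleton_iff] at hK
    subst hK
    exact ⟨hK₀W ω, lt_of_le_of_lt (hle ω) hhinfγ₁⟩
  obtain ⟨u, v, hu, hv, hKu, hIv, huv⟩ :=
    generalized_tube_lemma isCompact_singleton isCompact_Icc hNopen hsub
  -- the final open set
  refine ⟨u ∩ ({K | MyAux.gN ((P.Acl K).map (Complex.ofReal ·)) < a₀ + 1}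
      ∩ ({K | MyAux.gN ((P.Bcl K).map (Complex.ofReal ·)) < b₀ + 1}
      ∩ ({K | MyAux.gN ((P.Ccl K).map (Complex.ofReal ·)) < c₀ + 1}
      ∩ ({K | MyAux.gN ((P.Dcl K).map (Complex.ofReal ·)) < d₀ + δ / 2}
      ∩ {K | IsHurwitz (P.Acl K)})))), ?_, ?_, ?_⟩
  · rintro K ⟨hKu', hKa, hKb, hKc, hKd, hKhur⟩
    simp only [Set.mem_setOf_eq] at hKa hKb hKc hKd
    refine ⟨hKhur, ?_⟩
    have hbound : ∀ ω : ℝ, MyAux.gN (P.transferAt K ω) ≤ max γ₁ (d₀ + δ) := by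
      intro ω
      rcases le_or_gt |ω| R with hsm | hbig
      · have hmem : ω ∈ Set.Icc (-R) R := abs_le.mp hsm
        have : (K, ω) ∈ Nset := huv (Set.mk_mem_prod hKu' (hIv hmem))
        exact le_max_iff.mpr (Or.inl this.2.le)
      · -- tail bound
        have haω : MyAux.gN ((P.Acl K).map (Complex.ofReal ·)) < |ω| := by linarith
        have h := (hTB K ω haω).1
        have hKa0 : 0 ≤ MyAux.gN ((P.Acl K).map (Complex.ofReal ·)) := MyAux.gN_nonneg _
        have hKb0 : 0 ≤ MyAux.gN ((P.Bcl K).map (Complex.ofReal ·)) := MyAux.gN_nonneg _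
        have hKc0 : 0 ≤ MyAux.gN ((P.Ccl K).map (Complex.ofReal ·)) := MyAux.gN_nonneg _
        have hden : 2 * (c₀ + 1) * (b₀ + 1) / δ ≤ |ω| - MyAux.gN ((P.Acl K).map (Complex.ofReal ·)) := by
          have : R - (a₀ + 1) ≤ |ω| - MyAux.gN ((P.Acl K).map (Complex.ofReal ·)) := by linarith
          rw [hR] at this
          linarith
        have hdenpos : 0 < |ω| - MyAux.gN ((P.Acl K).map (Complex.ofReal ·)) := by linarith
        have hcbpos : 0 < 2 * (c₀ + 1) * (b₀ + 1) / δ := by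
          apply div_pos (by nlinarith) hδpos
        have hinv : (|ω| - MyAux.gN ((P.Acl K).map (Complex.ofReal ·)))⁻¹
            ≤ (2 * (c₀ + 1) * (b₀ + 1) / δ)⁻¹ := by
          exact inv_anti₀ hcbpos hden
        have htail : MyAux.gN ((P.Ccl K).map (Complex.ofReal ·))
            * MyAux.gN ((P.Bcl K).map (Complex.ofReal ·))
            * (|ω| - MyAux.gN ((P.Acl K).map (Complex.ofReal ·)))⁻¹ ≤ δ / 2 := by
          have h1 : MyAux.gN ((P.Ccl K).map (Complex.ofReal ·))
              * MyAux.gN ((P.Bcl K).map (Complex.ofReal ·)) ≤ (c₀ + 1) * (b₀ + 1) := by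
            nlinarith
          rw [← div_eq_mul_inv, div_le_iff₀ hdenpos]
          have hkey : δ / 2 * (2 * (c₀ + 1) * (b₀ + 1) / δ) = (c₀ + 1) * (b₀ + 1) := by
            rw [div_mul_div_comm]
            rw [div_eq_iff (by apply ne_of_gt; nlinarith : (2 : ℝ) * δ ≠ 0)]
            ring
          have h2 : δ / 2 * (2 * (c₀ + 1) * (b₀ + 1) / δ)
              ≤ δ / 2 * (|ω| - MyAux.gN ((P.Acl K).map (Complex.ofReal ·))) :=
            mul_le_mul_of_nonneg_left hden (half_pos hδpos).le
          rw [hkey] at h2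
          linarith
        refine le_max_iff.mpr (Or.inr ?_)
        calc MyAux.gN (P.transferAt K ω)
            ≤ MyAux.gN ((P.Ccl K).map (Complex.ofReal ·))
              * MyAux.gN ((P.Bcl K).map (Complex.ofReal ·))
              * (|ω| - MyAux.gN ((P.Acl K).map (Complex.ofReal ·)))⁻¹
              + MyAux.gN ((P.Dcl K).map (Complex.ofReal ·)) := h
          _ ≤ δ / 2 + (d₀ + δ / 2) := by linarith
          _ = d₀ + δ := by ring
    have hmax : max γ₁ (d₀ + δ) < γ := by
      apply max_lt hγ₁lt
      rw [hδ]; linarith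
    calc P.hinfNorm K ≤ max γ₁ (d₀ + δ) := ciSup_le hbound
      _ < γ := hmax
  · refine hu.inter (IsOpen.inter ?_ (IsOpen.inter ?_ (IsOpen.inter ?_ (IsOpen.inter ?_ ?_))))
    · exact isOpen_Iio.preimage (MyAux.continuous_gN.comp (MyAux.continuous_mapC.comp P.contAcl))
    · exact isOpen_Iio.preimage (MyAux.continuous_gN.comp (MyAux.continuous_mapC.comp P.contBcl))
    · exact isOpen_Iio.preimage (MyAux.continuous_gN.comp (MyAux.continuous_mapC.comp P.contCcl))
    · exact isOpen_Iio.preimage (MyAux.continuous_gN.comp (MyAux.continuous_mapC.comp P.contDcl))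
    · exact MyAux.isOpen_setOf_isHurwitz.preimage P.contAcl
  · refine ⟨hKu rfl, ?_, ?_, ?_, ?_, hK₀hur⟩
    · simp only [Set.mem_setOf_eq]
      rw [← ha₀]; linarith
    · simp only [Set.mem_setOf_eq]
      rw [← hb₀]; linarith
    · simp only [Set.mem_setOf_eq]
      rw [← hc₀]; linarith
    · simp only [Set.mem_setOf_eq]
      rw [← hd₀]; linarith
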